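/- In the poset S_n of spherical subsets of E_{9+n}, the full subposet E_n = {J ∈ S_n : J ∩ I_0 is spherical and i ∈ J for all i < 0} is cofinal: every J ∈ S_n is contained in some element of E_n. -/

import Mathlib

/-- Adjacency in the generalized Dynkin diagrams `E_{9+n}`: nodes are integers
`-n, …, -1, 0, 1, …, 7` forming a chain, with the extra node `8` attached to node `5`. -/
def eAdj (i j : ℤ) : Prop :=
  (i ≠ 8 ∧ j ≠ 8 ∧ (i - j = 1 ∨ j - i = 1)) ∨ (i = 5 ∧ j = 8) ∨ (i = 8 ∧ j = 5)

instance (i j : ℤ) : Decidable (eAdj i j) := by unfold eAdj; infer_instance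

/-- The generalized Cartan matrix entries for the `E`-family diagrams. -/
def eCartan (i j : ℤ) : ℤ := if i = j then 2 else if eAdj i j then -1 else 0

/-- The principal submatrix of the `E`-family Cartan matrix with indices in `J`. -/
def eMat (J : Finset ℤ) : Matrix J J ℤ := fun i j => eCartan i.1 j.1

/-- A finite set of nodes is spherical if all principal minors of the corresponding
principal submatrix of the `E`-family Cartan matrix are positive (finite type). -/
def eSph (J : Finset ℤ) : Prop := ∀ K : Finset ℤ, K ⊆ J → 0 < (eMat K).det

open scoped Matrix

private lemma eCartan_symm (i j : ℤ) : eCartan i j = eCartan j i := by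
  unfold eCartan eAdj; split_ifs <;> omega

private lemma eCartan_eight_neg (j : ℤ) (hj : j < 0) : eCartan 8 j = 0 := by
  unfold eCartan eAdj; split_ifs <;> omega

private def ch (i : ℤ) : ℤ → ℝ := fun s =>
  (if s = i then 1 else 0) - (if s = i + 1 then 1 else 0)

private lemma sum_mul_delta (S : Finset ℤ) (a : ℤ) (ha : a ∈ S) (f : ℤ → ℝ) :
    ∑ s ∈ S, f s * (if s = a then (1:ℝ) else 0) = f a := by
  rw [Finset.sum_eq_single_of_mem a ha (fun b _ hb => by simp [hb])]
  simp

private lemma sum_f_ch (S : Finset ℤ) (j : ℤ) (hj : j ∈ S) (hj1 : j + 1 ∈ S) (f : ℤ → ℝ) :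
    ∑ s ∈ S, f s * ch j s = f j - f (j + 1) := by
  unfold ch
  simp only [mul_sub]
  rw [Finset.sum_sub_distrib, sum_mul_delta S j hj f, sum_mul_delta S (j + 1) hj1 f]

private lemma gram_chain (S : Finset ℤ) (i j : ℤ) (hj : j ∈ S) (hj1 : j + 1 ∈ S)
    (hi8 : i ≠ 8) (hj8 : j ≠ 8) :
    ∑ s ∈ S, ch i s * ch j s = (eCartan i j : ℝ) := by
  rw [sum_f_ch S j hj hj1 (ch i)]
  unfold ch eCartan
  split_ifs <;> first | (exfalso; unfold eAdj at *; omega) | (exfalso; omega) | norm_num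

private lemma det_pos_of_gram (K Jp S : Finset ℤ) (hK : K ⊆ Jp) (v : ℤ → ℤ → ℝ)
    (hg : ∀ i ∈ Jp, ∀ j ∈ Jp, ∑ s ∈ S, v i s * v j s = (eCartan i j : ℝ))
    (hind : ∀ y : ℤ → ℝ, (∀ i, i ∉ Jp → y i = 0) →
      (∀ s ∈ S, ∑ i ∈ Jp, y i * v i s = 0) → ∀ i, y i = 0) :
    0 < (eMat K).det := by
  classical
  have hpd : ((eMat K).map ((↑) : ℤ → ℝ)).PosDef := by
    rw [Matrix.posDef_iff_dotProduct_mulVec]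
    constructor
    · ext i j
      simp only [Matrix.conjTranspose_apply, Matrix.map_apply, eMat, star_trivial]
      exact_mod_cast eCartan_symm j.1 i.1
    · intro x hx
      have hstar : star x = x := funext fun i => by simp
      rw [hstar]
      set y : ℤ → ℝ := fun t => dite (t ∈ K) (fun h => x ⟨t, h⟩) (fun _ => (0:ℝ)) with hy
      have hyx : ∀ i : {a // a ∈ K}, y i.1 = x i := fun i => by rw [hy]; exact dif_pos i.2
      have step1 : ∀ g : ℤ → ℝ, ∑ i : {a // a ∈ K}, g i.1 * x i = ∑ i ∈ Jp, g i * y i := by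
        intro g
        have h1 : ∑ i : {a // a ∈ K}, g i.1 * x i = ∑ i ∈ K, g i * y i := by
          rw [← Finset.sum_coe_sort K (fun i => g i * y i)]
          exact Finset.sum_congr rfl fun i _ => by rw [hyx i]
        rw [h1]
        apply Finset.sum_subset hK
        intro b _ hbK
        rw [hy]
        simp [hbK]
      have key : x ⬝ᵥ ((eMat K).map ((↑) : ℤ → ℝ)).mulVec x
          = ∑ s ∈ S, (∑ i ∈ Jp, y i * v i s) * (∑ i ∈ Jp, y i * v i s) := by
        have e0 : x ⬝ᵥ ((eMat K).map ((↑) : ℤ → ℝ)).mulVec x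
            = ∑ i : {a // a ∈ K}, (∑ j : {a // a ∈ K}, (eCartan i.1 j.1 : ℝ) * x j) * x i := by
          simp only [dotProduct, Matrix.mulVec, Matrix.map_apply, eMat]
          exact Finset.sum_congr rfl fun i _ => mul_comm _ _
        rw [e0]
        have e1 : ∀ i : {a // a ∈ K}, (∑ j : {a // a ∈ K}, (eCartan i.1 j.1 : ℝ) * x j)
            = ∑ b ∈ Jp, (eCartan i.1 b : ℝ) * y b := fun i => step1 (fun b => (eCartan i.1 b : ℝ))
        calc ∑ i : {a // a ∈ K}, (∑ j : {a // a ∈ K}, (eCartan i.1 j.1 : ℝ) * x j) * x i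
            = ∑ a ∈ Jp, (∑ b ∈ Jp, (eCartan a b : ℝ) * y b) * y a := by
              rw [← step1 (fun a => ∑ b ∈ Jp, (eCartan a b : ℝ) * y b)]
              exact Finset.sum_congr rfl fun i _ => by rw [e1 i]
          _ = ∑ a ∈ Jp, ∑ b ∈ Jp, ∑ s ∈ S, (y a * v a s) * (y b * v b s) := by
              refine Finset.sum_congr rfl fun a ha => ?_
              rw [Finset.sum_mul]
              refine Finset.sum_congr rfl fun b hb => ?_
              have h2 : ∑ s ∈ S, (y a * v a s) * (y b * v b s)
                  = (∑ s ∈ S, v a s * v b s) * (y a * y b) := by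
                rw [Finset.sum_mul]
                exact Finset.sum_congr rfl fun s _ => by ring
              rw [h2, hg a ha b hb]
              ring
          _ = ∑ a ∈ Jp, ∑ s ∈ S, ∑ b ∈ Jp, (y a * v a s) * (y b * v b s) :=
              Finset.sum_congr rfl fun a _ => Finset.sum_comm
          _ = ∑ s ∈ S, ∑ a ∈ Jp, ∑ b ∈ Jp, (y a * v a s) * (y b * v b s) := Finset.sum_comm
          _ = ∑ s ∈ S, (∑ i ∈ Jp, y i * v i s) * (∑ i ∈ Jp, y i * v i s) := by
              exact Finset.sum_congr rfl fun s _ => (Finset.sum_mul_sum Jp Jp _ _).symm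
      have hnn : ∀ s ∈ S, 0 ≤ (∑ i ∈ Jp, y i * v i s) * (∑ i ∈ Jp, y i * v i s) :=
        fun s _ => mul_self_nonneg _
      have hle : 0 ≤ x ⬝ᵥ ((eMat K).map ((↑) : ℤ → ℝ)).mulVec x := by
        rw [key]; exact Finset.sum_nonneg hnn
      rcases eq_or_lt_of_le hle with heq | hlt
      · exfalso
        have hz : ∀ s ∈ S, ∑ i ∈ Jp, y i * v i s = 0 := by
          intro s hs
          have h0 : ∑ s ∈ S, (∑ i ∈ Jp, y i * v i s) * (∑ i ∈ Jp, y i * v i s) = 0 := by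
            rw [← key]; exact heq.symm
          exact mul_self_eq_zero.mp ((Finset.sum_eq_zero_iff_of_nonneg hnn).mp h0 s hs)
        have hy0 := hind y (fun i hi => by rw [hy]; exact dif_neg (fun h => hi (hK h))) hz
        apply hx
        funext i
        rw [← hyx i, hy0 i.1]
        simp
      · exact hlt
  have hdet := hpd.det_pos
  have hcast : ((eMat K).det : ℝ) = ((eMat K).map ((↑) : ℤ → ℝ)).det := by
    have h := RingHom.map_det (Int.castRingHom ℝ) (eMat K)
    simpa using h
  have hfin : (0:ℝ) < ((eMat K).det : ℝ) := by rw [hcast]; exact hdet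
  exact_mod_cast hfin

private lemma master (n : ℕ) (k : ℤ) (hk0 : 0 ≤ k) (hk8 : k ≤ 8) (w : ℤ → ℝ)
    (hw0 : ∀ s : ℤ, s ≤ 0 → w s = 0) (hwtop : ∀ s : ℤ, 13 ≤ s → w s = 0)
    (hnorm : k ≠ 8 → ∑ s ∈ Finset.Icc (1:ℤ) 12, w s * w s = 2)
    (hgram8 : k ≠ 8 → ∀ j : ℤ, 0 ≤ j → j ≤ 7 → j ≠ k → w j - w (j + 1) = (eCartan 8 j : ℝ))
    (hsolve : ∀ (c : ℝ) (z : ℤ → ℝ), (k = 8 → c = 0) → z 0 = 0 → z k = 0 →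
      (∀ s : ℤ, 8 ≤ s → z s = 0) →
      (∀ s : ℤ, 1 ≤ s → s ≤ 12 → z s - z (s - 1) + c * w s = 0) →
      (∀ s : ℤ, 1 ≤ s → s ≤ 7 → z s = 0) ∧ c = 0) :
    ∀ K ⊆ (Finset.Icc (-(n : ℤ)) 8).erase k, 0 < (eMat K).det := by
  intro K hK
  apply det_pos_of_gram K ((Finset.Icc (-(n : ℤ)) 8).erase k) (Finset.Icc (-(n:ℤ) - 1) 12) hK
      (fun i => if i = 8 then w else ch i)
  · -- Gram condition
    intro i hi j hj
    obtain ⟨hik, hiI⟩ := Finset.mem_erase.mp hi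
    obtain ⟨hjk, hjI⟩ := Finset.mem_erase.mp hj
    rw [Finset.mem_Icc] at hiI hjI
    by_cases hi8 : i = 8
    · by_cases hj8 : j = 8
      · subst hi8; subst hj8
        simp only [reduceIte]
        have hsub : ∑ s ∈ Finset.Icc (1:ℤ) 12, w s * w s
            = ∑ s ∈ Finset.Icc (-(n:ℤ) - 1) 12, w s * w s := by
          apply Finset.sum_subset
          · intro t ht; rw [Finset.mem_Icc] at *; omega
          · intro t ht hts
            rw [Finset.mem_Icc] at ht hts
            have : w t = 0 := by
              rcases le_or_gt t 0 with h | h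
              · exact hw0 t h
              · exact hwtop t (by omega)
            rw [this]; ring
        rw [← hsub, hnorm (fun h => hik (h ▸ rfl))]
        norm_num [eCartan]
      · subst hi8
        simp only [reduceIte, if_neg hj8]
        rw [sum_f_ch _ j (by rw [Finset.mem_Icc]; omega) (by rw [Finset.mem_Icc]; omega) w]
        rcases le_or_gt 0 j with hj0 | hj0
        · exact hgram8 (fun h => hik (h ▸ rfl)) j hj0 (by omega) hjk
        · rw [hw0 j (by omega), hw0 (j+1) (by omega), eCartan_eight_neg j hj0]
          norm_num
    · by_cases hj8 : j = 8
      · subst hj8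
        simp only [reduceIte, if_neg hi8]
        have hcomm : ∑ s ∈ Finset.Icc (-(n:ℤ) - 1) 12, ch i s * w s
            = ∑ s ∈ Finset.Icc (-(n:ℤ) - 1) 12, w s * ch i s :=
          Finset.sum_congr rfl fun s _ => mul_comm _ _
        rw [hcomm, sum_f_ch _ i (by rw [Finset.mem_Icc]; omega) (by rw [Finset.mem_Icc]; omega) w,
          eCartan_symm]
        rcases le_or_gt 0 i with hi0 | hi0
        · exact hgram8 (fun h => hjk (h ▸ rfl)) i hi0 (by omega) hik
        · rw [hw0 i (by omega), hw0 (i+1) (by omega), eCartan_eight_neg i hi0]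
          norm_num
      · simp only [if_neg hi8, if_neg hj8]
        exact gram_chain _ i j (by rw [Finset.mem_Icc]; omega) (by rw [Finset.mem_Icc]; omega)
          hi8 hj8
  · -- independence
    intro y hysupp heq
    set c : ℝ := if (8:ℤ) ∈ (Finset.Icc (-(n : ℤ)) 8).erase k then y 8 else 0 with hc
    set z : ℤ → ℝ := fun t =>
      if t ∈ ((Finset.Icc (-(n : ℤ)) 8).erase k).erase 8 then y t else 0 with hz
    have hzout : ∀ t, t ∉ ((Finset.Icc (-(n : ℤ)) 8).erase k).erase 8 → z t = 0 :=
      fun t ht => by rw [hz]; exact if_neg ht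
    have hTmem : ∀ t, t ∈ ((Finset.Icc (-(n : ℤ)) 8).erase k).erase 8 →
        (-(n:ℤ) ≤ t ∧ t ≤ 8 ∧ t ≠ k ∧ t ≠ 8) := by
      intro t ht
      obtain ⟨ht8, ht2⟩ := Finset.mem_erase.mp ht
      obtain ⟨htk, htI⟩ := Finset.mem_erase.mp ht2
      rw [Finset.mem_Icc] at htI
      exact ⟨htI.1, htI.2, htk, ht8⟩
    have hdecomp : ∀ s ∈ Finset.Icc (-(n:ℤ) - 1) 12, z s - z (s - 1) + c * w s = 0 := by
      intro s hs
      have hsum : ∑ i ∈ ((Finset.Icc (-(n : ℤ)) 8).erase k).erase 8,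
          y i * (if i = (8:ℤ) then w else ch i) s = z s - z (s - 1) := by
        have congr1 : ∀ i ∈ ((Finset.Icc (-(n : ℤ)) 8).erase k).erase 8,
            y i * (if i = (8:ℤ) then w else ch i) s
            = (if i = s then y i else 0) - (if i = s - 1 then y i else 0) := by
          intro i hi
          rw [if_neg (hTmem i hi).2.2.2]
          unfold ch
          split_ifs <;> first | (exfalso; omega) | ring
        rw [Finset.sum_congr rfl congr1, Finset.sum_sub_distrib,
          Finset.sum_ite_eq' _ s y, Finset.sum_ite_eq' _ (s-1) y]
      by_cases h8 : (8:ℤ) ∈ (Finset.Icc (-(n : ℤ)) 8).erase k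
      · have hQ := heq s hs
        rw [← Finset.sum_erase_add _ _ h8] at hQ
        rw [if_pos rfl] at hQ
        rw [hsum] at hQ
        rw [hc, if_pos h8]
        linarith
      · have hQ := heq s hs
        rw [← Finset.erase_eq_of_notMem h8] at hQ
        rw [hsum] at hQ
        rw [hc, if_neg h8]
        linarith
    have hneg : ∀ s : ℤ, -(n:ℤ) - 1 ≤ s → (s ≤ 0 → z s = 0) := by
      refine Int.le_induction ?_ ?_
      · intro _
        have h := hdecomp (-(n:ℤ) - 1) (by rw [Finset.mem_Icc]; omega)
        have h1 : z (-(n:ℤ) - 1 - 1) = 0 := hzout _ (by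
          intro hmem; exact absurd (hTmem _ hmem).1 (by omega))
        have h2 : w (-(n:ℤ) - 1) = 0 := hw0 _ (by omega)
        rw [h1, h2] at h
        linarith
      · intro s hs ih hs0
        have h := hdecomp (s + 1) (by rw [Finset.mem_Icc]; omega)
        have h1 : s + 1 - 1 = s := by ring
        rw [h1] at h
        have h2 : z s = 0 := ih (by omega)
        have h3 : w (s + 1) = 0 := hw0 _ (by omega)
        rw [h2, h3] at h
        linarith
    have hc8 : k = 8 → c = 0 := by
      intro hk8'
      rw [hc, if_neg]
      intro hmem
      exact (Finset.mem_erase.mp hmem).1 hk8'.symm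
    have hz0 : z 0 = 0 := hneg 0 (by omega) (le_refl 0)
    have hzk : z k = 0 := hzout k (by
      intro hmem
      exact (Finset.mem_erase.mp (Finset.mem_of_mem_erase hmem)).1 rfl)
    have hz8 : ∀ s : ℤ, 8 ≤ s → z s = 0 := by
      intro s hs
      apply hzout
      intro hmem
      obtain ⟨_, h2, _, h4⟩ := hTmem s hmem
      omega
    have heqs : ∀ s : ℤ, 1 ≤ s → s ≤ 12 → z s - z (s - 1) + c * w s = 0 :=
      fun s h1 h2 => hdecomp s (Finset.mem_Icc.mpr (by omega))
    obtain ⟨hmid, hc0⟩ := hsolve c z hc8 hz0 hzk hz8 heqs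
    intro i
    by_cases hiT : i ∈ ((Finset.Icc (-(n : ℤ)) 8).erase k).erase 8
    · have hyi : y i = z i := by rw [hz]; exact (if_pos hiT).symm
      obtain ⟨h1, h2, _, h4⟩ := hTmem i hiT
      rcases le_or_gt i 0 with h | h
      · rw [hyi]; exact hneg i (by omega) h
      · rw [hyi]; exact hmid i h (by omega)
    · by_cases hiJ : i ∈ (Finset.Icc (-(n : ℤ)) 8).erase k
      · have hi8 : i = 8 := by
          by_contra hne
          exact hiT (Finset.mem_erase.mpr ⟨hne, hiJ⟩)
        subst hi8
        have hcy : c = y 8 := by rw [hc, if_pos hiJ]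
        rw [← hcy]
        exact hc0
      · exact hysupp i hiJ

private lemma sum_Icc12 (f : ℤ → ℝ) : ∑ s ∈ Finset.Icc (1:ℤ) 12, f s
    = f 1 + f 2 + f 3 + f 4 + f 5 + f 6 + f 7 + f 8 + f 9 + f 10 + f 11 + f 12 := by
  have h : Finset.Icc (1:ℤ) 12 = ({1,2,3,4,5,6,7,8,9,10,11,12} : Finset ℤ) := by
    ext x
    simp only [Finset.mem_Icc, Finset.mem_insert, Finset.mem_singleton]
    omega
  rw [h]
  rw [Finset.sum_insert (by norm_num [Finset.mem_insert]),
      Finset.sum_insert (by norm_num [Finset.mem_insert]),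
      Finset.sum_insert (by norm_num [Finset.mem_insert]),
      Finset.sum_insert (by norm_num [Finset.mem_insert]),
      Finset.sum_insert (by norm_num [Finset.mem_insert]),
      Finset.sum_insert (by norm_num [Finset.mem_insert]),
      Finset.sum_insert (by norm_num [Finset.mem_insert]),
      Finset.sum_insert (by norm_num [Finset.mem_insert]),
      Finset.sum_insert (by norm_num [Finset.mem_insert]),
      Finset.sum_insert (by norm_num [Finset.mem_insert]),
      Finset.sum_insert (by norm_num [Finset.mem_insert]),
      Finset.sum_singleton]
  ring

private noncomputable def W (k : ℤ) : ℤ → ℝ := fun s =>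
  if k = 5 then (if s = 9 ∨ s = 10 then 1 else 0)
  else if k = 6 then (if s = 6 ∨ s = 9 then 1 else 0)
  else if k = 7 then (if s = 6 ∨ s = 7 then 1 else 0)
  else if k = 8 then 0
  else (if k + 1 ≤ s ∧ s ≤ 5 then (-1/2 : ℝ) else 0) + (if 6 ≤ s ∧ s ≤ 8 then 1/2 else 0)
    + (if 9 ≤ s ∧ s ≤ 8 + k then 1/2 else 0)


private def marks : ℤ → ℤ := fun i =>
  if i = 0 then 1 else if i = 1 then 2 else if i = 2 then 3 else if i = 3 then 4
  else if i = 4 then 5 else if i = 5 then 6 else if i = 6 then 4 else if i = 7 then 2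
  else if i = 8 then 3 else 0

set_option maxHeartbeats 1000000 in
private lemma marks_null :
    ∀ a ∈ Finset.Icc (0:ℤ) 8, ∑ j ∈ Finset.Icc (0:ℤ) 8, eCartan a j * marks j = 0 := by decide


set_option maxHeartbeats 4000000 in
/-- In the poset `S_n` of spherical subsets of `E_{9+n}`, the subposet
`E_n = {J ∈ S_n : J ∩ I₀ spherical and i ∈ J for all i < 0}` is cofinal: every
spherical subset is contained in some element of `E_n`. -/
theorem stmt8 (n : ℕ) (J : Finset ℤ) (hJ : J ⊆ Finset.Icc (-(n : ℤ)) 8)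
    (hs : eSph J) :
    ∃ J' : Finset ℤ, J ⊆ J' ∧ J' ⊆ Finset.Icc (-(n : ℤ)) 8 ∧ eSph J' ∧
      eSph (J' ∩ Finset.Icc (0 : ℤ) 8) ∧ Finset.Icc (-(n : ℤ)) (-1) ⊆ J' := by
  have hex : ∃ k : ℤ, 0 ≤ k ∧ k ≤ 8 ∧ k ∉ J := by
    by_contra hcon
    push_neg at hcon
    have hsub : Finset.Icc (0:ℤ) 8 ⊆ J := by
      intro x hx
      rw [Finset.mem_Icc] at hx
      exact hcon x hx.1 hx.2
    have hdet := hs _ hsub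
    have hzero : (eMat (Finset.Icc (0:ℤ) 8)).det = 0 := by
      rw [← Matrix.exists_mulVec_eq_zero_iff]
      refine ⟨fun j => marks j.1, ?_, ?_⟩
      · intro h0
        have h1 := congrFun h0 ⟨0, by decide⟩
        norm_num [marks] at h1
      · funext i
        have hrw : ((eMat (Finset.Icc (0:ℤ) 8)).mulVec fun j => marks j.1) i
            = ∑ j ∈ Finset.Icc (0:ℤ) 8, eCartan i.1 j * marks j := by
          rw [← Finset.sum_coe_sort (Finset.Icc (0:ℤ) 8) (fun b => eCartan i.1 b * marks b)]
          rfl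
        rw [hrw, marks_null i.1 i.2]
        rfl
    omega
  obtain ⟨k, hk0, hk8, hkJ⟩ := hex
  have hmain : ∀ K ⊆ (Finset.Icc (-(n : ℤ)) 8).erase k, 0 < (eMat K).det := by
    interval_cases k
    · refine master n 0 (by norm_num) (by norm_num) (W 0) ?_ ?_ ?_ ?_ ?_
      · intro s hs
        norm_num [W] <;> first | omega | (split_ifs <;> first | (exfalso; omega) | norm_num)
      · intro s hs
        norm_num [W] <;> first | omega | (split_ifs <;> first | (exfalso; omega) | norm_num)
      · intro _
        rw [sum_Icc12]
        norm_num [W]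
      · intro _ j h0 h7 hjk
        interval_cases j <;> first | (exact absurd rfl hjk) | norm_num [W, eCartan, eAdj]
      · intro c z hc8 h0 hk he8 he
        have z8 := he8 8 (by norm_num)
        have z9 := he8 9 (by norm_num)
        have z10 := he8 10 (by norm_num)
        have e1 := he 1 (by norm_num) (by norm_num)
        have e2 := he 2 (by norm_num) (by norm_num)
        have e3 := he 3 (by norm_num) (by norm_num)
        have e4 := he 4 (by norm_num) (by norm_num)
        have e5 := he 5 (by norm_num) (by norm_num)
        have e6 := he 6 (by norm_num) (by norm_num)
        have e7 := he 7 (by norm_num) (by norm_num)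
        have e8 := he 8 (by norm_num) (by norm_num)
        have e9 := he 9 (by norm_num) (by norm_num)
        norm_num [W] at e1 e2 e3 e4 e5 e6 e7 e8 e9
        constructor
        · intro s h1 h7
          interval_cases s <;> linarith
        · linarith
    · refine master n 1 (by norm_num) (by norm_num) (W 1) ?_ ?_ ?_ ?_ ?_
      · intro s hs
        norm_num [W] <;> first | omega | (split_ifs <;> first | (exfalso; omega) | norm_num)
      · intro s hs
        norm_num [W] <;> first | omega | (split_ifs <;> first | (exfalso; omega) | norm_num)
      · intro _
        rw [sum_Icc12]
        norm_num [W]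
      · intro _ j h0 h7 hjk
        interval_cases j <;> first | (exact absurd rfl hjk) | norm_num [W, eCartan, eAdj]
      · intro c z hc8 h0 hk he8 he
        have z8 := he8 8 (by norm_num)
        have z9 := he8 9 (by norm_num)
        have z10 := he8 10 (by norm_num)
        have e1 := he 1 (by norm_num) (by norm_num)
        have e2 := he 2 (by norm_num) (by norm_num)
        have e3 := he 3 (by norm_num) (by norm_num)
        have e4 := he 4 (by norm_num) (by norm_num)
        have e5 := he 5 (by norm_num) (by norm_num)
        have e6 := he 6 (by norm_num) (by norm_num)
        have e7 := he 7 (by norm_num) (by norm_num)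
        have e8 := he 8 (by norm_num) (by norm_num)
        have e9 := he 9 (by norm_num) (by norm_num)
        norm_num [W] at e1 e2 e3 e4 e5 e6 e7 e8 e9
        constructor
        · intro s h1 h7
          interval_cases s <;> linarith
        · linarith
    · refine master n 2 (by norm_num) (by norm_num) (W 2) ?_ ?_ ?_ ?_ ?_
      · intro s hs
        norm_num [W] <;> first | omega | (split_ifs <;> first | (exfalso; omega) | norm_num)
      · intro s hs
        norm_num [W] <;> first | omega | (split_ifs <;> first | (exfalso; omega) | norm_num)
      · intro _
        rw [sum_Icc12]
        norm_num [W]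
      · intro _ j h0 h7 hjk
        interval_cases j <;> first | (exact absurd rfl hjk) | norm_num [W, eCartan, eAdj]
      · intro c z hc8 h0 hk he8 he
        have z8 := he8 8 (by norm_num)
        have z9 := he8 9 (by norm_num)
        have z10 := he8 10 (by norm_num)
        have e1 := he 1 (by norm_num) (by norm_num)
        have e2 := he 2 (by norm_num) (by norm_num)
        have e3 := he 3 (by norm_num) (by norm_num)
        have e4 := he 4 (by norm_num) (by norm_num)
        have e5 := he 5 (by norm_num) (by norm_num)
        have e6 := he 6 (by norm_num) (by norm_num)
        have e7 := he 7 (by norm_num) (by norm_num)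
        have e8 := he 8 (by norm_num) (by norm_num)
        have e9 := he 9 (by norm_num) (by norm_num)
        norm_num [W] at e1 e2 e3 e4 e5 e6 e7 e8 e9
        constructor
        · intro s h1 h7
          interval_cases s <;> linarith
        · linarith
    · refine master n 3 (by norm_num) (by norm_num) (W 3) ?_ ?_ ?_ ?_ ?_
      · intro s hs
        norm_num [W] <;> first | omega | (split_ifs <;> first | (exfalso; omega) | norm_num)
      · intro s hs
        norm_num [W] <;> first | omega | (split_ifs <;> first | (exfalso; omega) | norm_num)
      · intro _
        rw [sum_Icc12]
        norm_num [W]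
      · intro _ j h0 h7 hjk
        interval_cases j <;> first | (exact absurd rfl hjk) | norm_num [W, eCartan, eAdj]
      · intro c z hc8 h0 hk he8 he
        have z8 := he8 8 (by norm_num)
        have z9 := he8 9 (by norm_num)
        have z10 := he8 10 (by norm_num)
        have e1 := he 1 (by norm_num) (by norm_num)
        have e2 := he 2 (by norm_num) (by norm_num)
        have e3 := he 3 (by norm_num) (by norm_num)
        have e4 := he 4 (by norm_num) (by norm_num)
        have e5 := he 5 (by norm_num) (by norm_num)
        have e6 := he 6 (by norm_num) (by norm_num)
        have e7 := he 7 (by norm_num) (by norm_num)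
        have e8 := he 8 (by norm_num) (by norm_num)
        have e9 := he 9 (by norm_num) (by norm_num)
        norm_num [W] at e1 e2 e3 e4 e5 e6 e7 e8 e9
        constructor
        · intro s h1 h7
          interval_cases s <;> linarith
        · linarith
    · refine master n 4 (by norm_num) (by norm_num) (W 4) ?_ ?_ ?_ ?_ ?_
      · intro s hs
        norm_num [W] <;> first | omega | (split_ifs <;> first | (exfalso; omega) | norm_num)
      · intro s hs
        norm_num [W] <;> first | omega | (split_ifs <;> first | (exfalso; omega) | norm_num)
      · intro _
        rw [sum_Icc12]
        norm_num [W]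
      · intro _ j h0 h7 hjk
        interval_cases j <;> first | (exact absurd rfl hjk) | norm_num [W, eCartan, eAdj]
      · intro c z hc8 h0 hk he8 he
        have z8 := he8 8 (by norm_num)
        have z9 := he8 9 (by norm_num)
        have z10 := he8 10 (by norm_num)
        have e1 := he 1 (by norm_num) (by norm_num)
        have e2 := he 2 (by norm_num) (by norm_num)
        have e3 := he 3 (by norm_num) (by norm_num)
        have e4 := he 4 (by norm_num) (by norm_num)
        have e5 := he 5 (by norm_num) (by norm_num)
        have e6 := he 6 (by norm_num) (by norm_num)
        have e7 := he 7 (by norm_num) (by norm_num)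
        have e8 := he 8 (by norm_num) (by norm_num)
        have e9 := he 9 (by norm_num) (by norm_num)
        norm_num [W] at e1 e2 e3 e4 e5 e6 e7 e8 e9
        constructor
        · intro s h1 h7
          interval_cases s <;> linarith
        · linarith
    · refine master n 5 (by norm_num) (by norm_num) (W 5) ?_ ?_ ?_ ?_ ?_
      · intro s hs
        norm_num [W] <;> first | omega | (split_ifs <;> first | (exfalso; omega) | norm_num)
      · intro s hs
        norm_num [W] <;> first | omega | (split_ifs <;> first | (exfalso; omega) | norm_num)
      · intro _
        rw [sum_Icc12]
        norm_num [W]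
      · intro _ j h0 h7 hjk
        interval_cases j <;> first | (exact absurd rfl hjk) | norm_num [W, eCartan, eAdj]
      · intro c z hc8 h0 hk he8 he
        have z8 := he8 8 (by norm_num)
        have z9 := he8 9 (by norm_num)
        have z10 := he8 10 (by norm_num)
        have e1 := he 1 (by norm_num) (by norm_num)
        have e2 := he 2 (by norm_num) (by norm_num)
        have e3 := he 3 (by norm_num) (by norm_num)
        have e4 := he 4 (by norm_num) (by norm_num)
        have e5 := he 5 (by norm_num) (by norm_num)
        have e6 := he 6 (by norm_num) (by norm_num)
        have e7 := he 7 (by norm_num) (by norm_num)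
        have e8 := he 8 (by norm_num) (by norm_num)
        have e9 := he 9 (by norm_num) (by norm_num)
        norm_num [W] at e1 e2 e3 e4 e5 e6 e7 e8 e9
        constructor
        · intro s h1 h7
          interval_cases s <;> linarith
        · linarith
    · refine master n 6 (by norm_num) (by norm_num) (W 6) ?_ ?_ ?_ ?_ ?_
      · intro s hs
        norm_num [W] <;> first | omega | (split_ifs <;> first | (exfalso; omega) | norm_num)
      · intro s hs
        norm_num [W] <;> first | omega | (split_ifs <;> first | (exfalso; omega) | norm_num)
      · intro _
        rw [sum_Icc12]
        norm_num [W]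
      · intro _ j h0 h7 hjk
        interval_cases j <;> first | (exact absurd rfl hjk) | norm_num [W, eCartan, eAdj]
      · intro c z hc8 h0 hk he8 he
        have z8 := he8 8 (by norm_num)
        have z9 := he8 9 (by norm_num)
        have z10 := he8 10 (by norm_num)
        have e1 := he 1 (by norm_num) (by norm_num)
        have e2 := he 2 (by norm_num) (by norm_num)
        have e3 := he 3 (by norm_num) (by norm_num)
        have e4 := he 4 (by norm_num) (by norm_num)
        have e5 := he 5 (by norm_num) (by norm_num)
        have e6 := he 6 (by norm_num) (by norm_num)
        have e7 := he 7 (by norm_num) (by norm_num)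
        have e8 := he 8 (by norm_num) (by norm_num)
        have e9 := he 9 (by norm_num) (by norm_num)
        norm_num [W] at e1 e2 e3 e4 e5 e6 e7 e8 e9
        constructor
        · intro s h1 h7
          interval_cases s <;> linarith
        · linarith
    · refine master n 7 (by norm_num) (by norm_num) (W 7) ?_ ?_ ?_ ?_ ?_
      · intro s hs
        norm_num [W] <;> first | omega | (split_ifs <;> first | (exfalso; omega) | norm_num)
      · intro s hs
        norm_num [W] <;> first | omega | (split_ifs <;> first | (exfalso; omega) | norm_num)
      · intro _
        rw [sum_Icc12]
        norm_num [W]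
      · intro _ j h0 h7 hjk
        interval_cases j <;> first | (exact absurd rfl hjk) | norm_num [W, eCartan, eAdj]
      · intro c z hc8 h0 hk he8 he
        have z8 := he8 8 (by norm_num)
        have z9 := he8 9 (by norm_num)
        have z10 := he8 10 (by norm_num)
        have e1 := he 1 (by norm_num) (by norm_num)
        have e2 := he 2 (by norm_num) (by norm_num)
        have e3 := he 3 (by norm_num) (by norm_num)
        have e4 := he 4 (by norm_num) (by norm_num)
        have e5 := he 5 (by norm_num) (by norm_num)
        have e6 := he 6 (by norm_num) (by norm_num)
        have e7 := he 7 (by norm_num) (by norm_num)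
        have e8 := he 8 (by norm_num) (by norm_num)
        have e9 := he 9 (by norm_num) (by norm_num)
        norm_num [W] at e1 e2 e3 e4 e5 e6 e7 e8 e9
        constructor
        · intro s h1 h7
          interval_cases s <;> linarith
        · linarith
    · refine master n 8 (by norm_num) (by norm_num) (W 8) ?_ ?_ ?_ ?_ ?_
      · intro s hs
        norm_num [W] <;> first | omega | (split_ifs <;> first | (exfalso; omega) | norm_num)
      · intro s hs
        norm_num [W] <;> first | omega | (split_ifs <;> first | (exfalso; omega) | norm_num)
      · intro h; exact absurd rfl h
      · intro h; exact absurd rfl h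
      · intro c z hc8 h0 hk he8 he
        have z8 := he8 8 (by norm_num)
        have z9 := he8 9 (by norm_num)
        have z10 := he8 10 (by norm_num)
        have e1 := he 1 (by norm_num) (by norm_num)
        have e2 := he 2 (by norm_num) (by norm_num)
        have e3 := he 3 (by norm_num) (by norm_num)
        have e4 := he 4 (by norm_num) (by norm_num)
        have e5 := he 5 (by norm_num) (by norm_num)
        have e6 := he 6 (by norm_num) (by norm_num)
        have e7 := he 7 (by norm_num) (by norm_num)
        have e8 := he 8 (by norm_num) (by norm_num)
        have e9 := he 9 (by norm_num) (by norm_num)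
        norm_num [W] at e1 e2 e3 e4 e5 e6 e7 e8 e9
        have hcz := hc8 rfl
        constructor
        · intro s h1 h7
          interval_cases s <;> linarith
        · linarith
  refine ⟨(Finset.Icc (-(n : ℤ)) 8).erase k, ?_, Finset.erase_subset _ _, hmain, ?_, ?_⟩
  · intro x hx
    exact Finset.mem_erase.mpr ⟨fun h => hkJ (h ▸ hx), hJ hx⟩
  · intro Kk hKk
    exact hmain Kk (hKk.trans Finset.inter_subset_left)
  · intro x hx
    rw [Finset.mem_Icc] at hx
    exact Finset.mem_erase.mpr ⟨by omega, Finset.mem_Icc.mpr (by omega)⟩
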